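/- Let G be a graph and L a list assignment such that: |L(x) ∩ L(y)| ≤ 1 for every edge xy, and for every vertex v either |L(v)| > deg(v), or there exist neighbors u, w of v with L(v) ∩ L(u) = L(v) ∩ L(w) and |L(v) ∩ L(u)| = 1. Suppose moreover that G is a minimal graph (with respect to subgraphs) admitting no proper L-coloring. Then for every vertex u, L(u) = ⋃_{v ∈ N(u)} (L(u) ∩ L(v)). -/

import Mathlib

open SimpleGraph

/-- A proper coloring of `G` from the list assignment `L`. -/
def ProperListColoring {V : Type*} (G : SimpleGraph V) (L : V → Finset ℕ) (φ : V → ℕ) : Prop :=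
  (∀ v, φ v ∈ L v) ∧ ∀ ⦃u v⦄, G.Adj u v → φ u ≠ φ v

/-- `G` is `(k,d)`-choosable. -/
def Choosable {V : Type*} (G : SimpleGraph V) (k d : ℕ) : Prop :=
  ∀ L : V → Finset ℕ, (∀ v, k ≤ (L v).card) →
    (∀ u v, G.Adj u v → (L u ∩ L v).card ≤ d) →
    ∃ φ, ProperListColoring G L φ


/-- A proper coloring of the subgraph `H` from the lists `L`, given as a total map. -/
def SubgraphProperColoring {V : Type*} {G : SimpleGraph V} (H : G.Subgraph)
    (L : V → Finset ℕ) (φ : V → ℕ) : Prop :=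
  (∀ x ∈ H.verts, φ x ∈ L x) ∧ ∀ ⦃x y⦄, H.Adj x y → φ x ≠ φ y

theorem stmt_13 {V : Type*} [Fintype V] (G : SimpleGraph V) [DecidableRel G.Adj]
    (L : V → Finset ℕ)
    (hsep : ∀ x y, G.Adj x y → (L x ∩ L y).card ≤ 1)
    (hdeg : ∀ v : V, G.degree v < (L v).card ∨
      ∃ u w, G.Adj v u ∧ G.Adj v w ∧ u ≠ w ∧
        L v ∩ L u = L v ∩ L w ∧ (L v ∩ L u).card = 1)
    (hG : ¬ ∃ φ, ProperListColoring G L φ)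
    (hmin : ∀ H : G.Subgraph, H ≠ ⊤ → ∃ φ, SubgraphProperColoring H L φ) :
    ∀ u : V, L u = (G.neighborFinset u).biUnion (fun v => L u ∩ L v) := by
  classical
  intro u
  apply Finset.Subset.antisymm
  · intro c hc
    by_contra hcb
    simp only [Finset.mem_biUnion, mem_neighborFinset, Finset.mem_inter, not_exists, not_and] at hcb
    have hH : ((⊤ : G.Subgraph).deleteVerts {u}) ≠ ⊤ := by
      intro h
      have : u ∈ ((⊤ : G.Subgraph).deleteVerts {u}).verts := by rw [h]; trivial
      simp [Subgraph.deleteVerts_verts] at this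
    obtain ⟨φ, hφ1, hφ2⟩ := hmin _ hH
    apply hG
    refine ⟨fun x => if x = u then c else φ x, ?_, ?_⟩
    · intro v
      by_cases hv : v = u
      · simp [hv, hc]
      · simp only [if_neg hv]
        exact hφ1 v (by simp [Subgraph.deleteVerts_verts, hv])
    · intro x y hxy
      by_cases hx : x = u
      · subst hx
        have hy : y ≠ x := fun h => G.loopless.irrefl _ (h ▸ hxy)
        simp only [if_pos rfl, if_neg hy, if_true]
        intro h
        exact hcb y hxy hc (by rw [h]; exact hφ1 y (by simp [hy]))
      · by_cases hy : y = u
        · subst hy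
          simp only [if_neg hx, if_pos rfl, if_true]
          intro h
          exact hcb x hxy.symm hc (by rw [← h]; exact hφ1 x (by simp [hx]))
        · simp only [if_neg hx, if_neg hy]
          apply hφ2
          simp [Subgraph.deleteVerts_adj, hx, hy, hxy]
  · intro c hc
    simp only [Finset.mem_biUnion, Finset.mem_inter] at hc
    obtain ⟨v, _, hc, _⟩ := hc
    exact hc
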